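/- If two closed PGA terms are derivably equal from the axioms PGA1–PGA4, then they denote the same instruction sequence (soundness of the PGA axioms for instruction sequence equivalence). -/

import Mathlib

/-- Primitive instructions of PGA over a set `B` of basic instructions. -/
inductive PrimInstr (B : Type) : Type where
  | basic : B → PrimInstr B      -- plain basic instruction a
  | postest : B → PrimInstr B    -- positive test instruction +a
  | negtest : B → PrimInstr B    -- negative test instruction −a
  | jump : ℕ → PrimInstr B       -- forward jump instruction #l
  | halt : PrimInstr B           -- termination instruction !

/-- Closed PGA terms over a type `I` of (primitive) instructions. -/
inductive PGA (I : Type) : Type where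
  | instr : I → PGA I
  | concat : PGA I → PGA I → PGA I
  | rep : PGA I → PGA I

namespace PGA

/-- `P.pow n` is the (n+1)-fold repetition `P^(n+1)`. -/
def pow {I : Type} (P : PGA I) : ℕ → PGA I
  | 0 => P
  | n + 1 => .concat P (P.pow n)

/-- Derivable equality of closed PGA terms from the axioms PGA1–PGA4 by
equational logic. -/
inductive Eq {I : Type} : PGA I → PGA I → Prop where
  | refl (x : PGA I) : Eq x x
  | symm {x y : PGA I} : Eq x y → Eq y x
  | trans {x y z : PGA I} : Eq x y → Eq y z → Eq x z
  | concat_congr {x x' y y' : PGA I} :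
      Eq x x' → Eq y y' → Eq (.concat x y) (.concat x' y')
  | rep_congr {x y : PGA I} : Eq x y → Eq (.rep x) (.rep y)
  | pga1 (x y z : PGA I) : Eq (.concat (.concat x y) z) (.concat x (.concat y z))
  | pga2 (x : PGA I) (n : ℕ) : Eq (.rep (x.pow n)) (.rep x)
  | pga3 (x y : PGA I) : Eq (.concat (.rep x) y) (.rep x)
  | pga4 (x y : PGA I) : Eq (.rep (.concat x y)) (.concat x (.rep (.concat y x)))


end PGA

/-- An instruction sequence: a non-empty finite sequence (list) or an infinite
sequence (function on ℕ) of instructions. -/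
def InstrSeq (I : Type) : Type := List I ⊕ (ℕ → I)

namespace PGA

/-- The instruction sequence denoted by a closed PGA term: an instruction
constant denotes the one-element sequence; `P ; Q` denotes the denotation of
`P` if that is infinite and otherwise the concatenation of the denotations;
`P^ω` denotes the denotation of `P` if that is infinite and otherwise the
infinite sequence repeating the (non-empty) finite denotation of `P`. -/
def den {I : Type} : PGA I → InstrSeq I
  | .instr u => Sum.inl [u]
  | .concat P Q =>
    match P.den with
    | Sum.inl l =>
      match Q.den with
      | Sum.inl l' => Sum.inl (l ++ l')
      | Sum.inr f => Sum.inr (fun n => if n < l.length then l.getD n (f 0) else f (n - l.length))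
    | Sum.inr f => Sum.inr f
  | .rep P =>
    match P.den with
    | Sum.inl [] => Sum.inl []   -- never happens: denotations are non-empty
    | Sum.inl (a :: l) => Sum.inr (fun n => (a :: l).getD (n % (a :: l).length) a)
    | Sum.inr f => Sum.inr f

end PGA


namespace PGAProof
open PGA

variable {I : Type}

lemma getD_irrel (l : List I) {n : ℕ} (h : n < l.length) (d d' : I) :
    l.getD n d = l.getD n d' := by
  rw [List.getD_eq_getElem l d h, List.getD_eq_getElem l d' h]

lemma den_concat_inr {P Q : PGA I} {f : ℕ → I} (h : P.den = Sum.inr f) :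
    (PGA.concat P Q).den = Sum.inr f := by
  simp only [PGA.den, h]; rfl

lemma den_concat_inl_inl {P Q : PGA I} {l l' : List I}
    (hP : P.den = Sum.inl l) (hQ : Q.den = Sum.inl l') :
    (PGA.concat P Q).den = Sum.inl (l ++ l') := by
  simp only [PGA.den, hP, hQ]; rfl

lemma den_concat_inl_inr {P Q : PGA I} {l : List I} {f : ℕ → I}
    (hP : P.den = Sum.inl l) (hQ : Q.den = Sum.inr f) :
    (PGA.concat P Q).den =
      Sum.inr (fun n => if n < l.length then l.getD n (f 0) else f (n - l.length)) := by
  simp only [PGA.den, hP, hQ]; rfl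

lemma den_rep_inr {P : PGA I} {f : ℕ → I} (h : P.den = Sum.inr f) :
    (PGA.rep P).den = Sum.inr f := by
  simp only [PGA.den, h]; rfl

lemma den_rep_cons {P : PGA I} {a : I} {t : List I} (h : P.den = Sum.inl (a :: t)) :
    (PGA.rep P).den = Sum.inr (fun n => (a :: t).getD (n % (a :: t).length) a) := by
  simp only [PGA.den, h]; rfl

lemma den_ne_nil : ∀ P : PGA I, P.den ≠ Sum.inl ([] : List I) := by
  intro P
  induction P with
  | instr u =>
    simp only [PGA.den]
    intro e
    exact List.cons_ne_nil u [] (Sum.inl.inj e)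
  | concat P Q ihP ihQ =>
    cases hP : P.den with
    | inl l =>
      have hl : l ≠ [] := fun e => ihP (e ▸ hP)
      cases hQ : Q.den with
      | inl l' =>
        rw [den_concat_inl_inl hP hQ]
        intro e
        exact hl (List.append_eq_nil_iff.mp (Sum.inl.inj e)).1
      | inr f => rw [den_concat_inl_inr hP hQ]; intro e; cases e
    | inr f => rw [den_concat_inr hP]; intro e; cases e
  | rep P ihP =>
    cases hP : P.den with
    | inl l =>
      cases l with
      | nil => exact absurd hP ihP
      | cons a t => rw [den_rep_cons hP]; intro e; cases e
    | inr f => rw [den_rep_inr hP]; intro e; cases e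

lemma den_rep_exists_inr (P : PGA I) : ∃ f, (PGA.rep P).den = Sum.inr f := by
  cases hP : P.den with
  | inl l =>
    cases l with
    | nil => exact absurd hP (den_ne_nil P)
    | cons a t => exact ⟨_, den_rep_cons hP⟩
  | inr f => exact ⟨f, den_rep_inr hP⟩

/-- n+1 copies of l concatenated. -/
def repN (l : List I) : ℕ → List I
  | 0 => l
  | n + 1 => l ++ repN l n

lemma repN_length (l : List I) (n : ℕ) : (repN l n).length = (n + 1) * l.length := by
  induction n with
  | zero => simp [repN]
  | succ n ih => simp [repN, ih]; ring

lemma repN_getD_lt (l : List I) (d d' : I) :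
    ∀ n j, j < (repN l n).length → (repN l n).getD j d = l.getD (j % l.length) d' := by
  intro n
  induction n with
  | zero =>
    intro j hj
    simp only [repN] at hj ⊢
    rw [Nat.mod_eq_of_lt hj]
    exact getD_irrel l hj d d'
  | succ n ih =>
    intro j hj
    simp only [repN] at hj ⊢
    by_cases h1 : j < l.length
    · rw [List.getD_append _ _ _ _ h1, Nat.mod_eq_of_lt h1]
      exact getD_irrel l h1 d d'
    · push_neg at h1
      rw [List.getD_append_right _ _ _ _ h1]
      have hj' : j - l.length < (repN l n).length := by
        simp only [List.length_append] at hj; omega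
      rw [ih _ hj']
      congr 1
      conv_rhs => rw [show j = (j - l.length) + l.length by omega]
      rw [Nat.add_mod_right]

lemma repN_cycle (l : List I) (hl : l ≠ []) (d d' : I) (n k : ℕ) :
    (repN l n).getD (k % (repN l n).length) d = l.getD (k % l.length) d' := by
  have hpos : 0 < l.length := List.length_pos_iff.mpr hl
  have hLpos : 0 < (repN l n).length := by
    rw [repN_length]; positivity
  rw [repN_getD_lt l d d' n _ (Nat.mod_lt _ hLpos),
    Nat.mod_mod_of_dvd _ ⟨n + 1, by rw [repN_length]; ring⟩]

lemma pow_den_inl {x : PGA I} {l : List I} (h : x.den = Sum.inl l) (n : ℕ) :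
    (x.pow n).den = Sum.inl (repN l n) := by
  induction n with
  | zero => simpa [PGA.pow, repN] using h
  | succ n ih =>
    show (PGA.concat x (x.pow n)).den = _
    rw [den_concat_inl_inl h ih]
    rfl

lemma pow_den_inr {x : PGA I} {f : ℕ → I} (h : x.den = Sum.inr f) (n : ℕ) :
    (x.pow n).den = Sum.inr f := by
  induction n with
  | zero => simpa [PGA.pow] using h
  | succ n ih =>
    show (PGA.concat x (x.pow n)).den = _
    rw [den_concat_inr h]

lemma rot (l l' : List I) (hl : l ≠ []) (m : ℕ) (a b : I) :
    (l ++ l').getD ((m + l.length) % (l ++ l').length) a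
      = (l' ++ l).getD (m % (l' ++ l).length) b := by
  have hp : 0 < l.length := List.length_pos_iff.mpr hl
  set p := l.length with hpdef
  set q := l'.length with hqdef
  have hL : (l ++ l').length = p + q := by simp [List.length_append, hpdef, hqdef]
  have hL' : (l' ++ l).length = q + p := by simp [List.length_append, hpdef, hqdef]
  rw [hL, hL']
  have hLpos : 0 < p + q := by omega
  set r := m % (q + p) with hr
  have hrlt : r < q + p := Nat.mod_lt _ (by omega)
  have hmod : (m + p) % (p + q) = (r + p) % (p + q) := by
    have hme : m ≡ r [MOD p + q] := by
      rw [hr, Nat.add_comm q p]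
      exact (Nat.mod_modEq m (p + q)).symm
    exact hme.add_right p
  rw [hmod]
  by_cases hrq : r < q
  · have h1 : r + p < p + q := by omega
    rw [Nat.mod_eq_of_lt h1, List.getD_append_right _ _ _ _ (by omega),
      List.getD_append _ _ _ _ (by omega : r < q)]
    have : r + p - p = r := by omega
    rw [this]
    exact getD_irrel l' (by omega) a b
  · push_neg at hrq
    have h1 : p + q ≤ r + p := by omega
    rw [Nat.mod_eq_sub_mod h1, Nat.mod_eq_of_lt (by omega : r + p - (p + q) < p + q)]
    have he : r + p - (p + q) = r - q := by omega
    rw [he, List.getD_append _ _ _ _ (by omega : r - q < p),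
      List.getD_append_right _ _ _ _ (by omega : q ≤ r)]
    exact getD_irrel l (by omega) a b

end PGAProof

/-- Soundness of the PGA axioms for instruction sequence
equivalence: if two closed PGA terms are derivably equal from PGA1–PGA4, then
they denote the same instruction sequence. -/
theorem pga_soundness (B : Type) (x y : PGA (PrimInstr B)) :
    PGA.Eq x y → x.den = y.den := by
  intro h
  induction h with
  | refl x => rfl
  | symm _ ih => exact ih.symm
  | trans _ _ ih1 ih2 => exact ih1.trans ih2
  | concat_congr _ _ ih1 ih2 => simp only [PGA.den]; rw [ih1, ih2]
  | rep_congr _ ih => simp only [PGA.den]; rw [ih]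
  | pga1 a b c =>
    cases ha : a.den with
    | inr f =>
      rw [PGAProof.den_concat_inr (PGAProof.den_concat_inr ha),
        PGAProof.den_concat_inr ha]
    | inl l =>
      cases hb : b.den with
      | inr f =>
        rw [PGAProof.den_concat_inr (PGAProof.den_concat_inl_inr ha hb),
          PGAProof.den_concat_inl_inr ha (PGAProof.den_concat_inr hb)]
      | inl l' =>
        cases hc : c.den with
        | inl l'' =>
          rw [PGAProof.den_concat_inl_inl (PGAProof.den_concat_inl_inl ha hb) hc,
            PGAProof.den_concat_inl_inl ha (PGAProof.den_concat_inl_inl hb hc),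
            List.append_assoc]
        | inr f =>
          rw [PGAProof.den_concat_inl_inr (PGAProof.den_concat_inl_inl ha hb) hc,
            PGAProof.den_concat_inl_inr ha (PGAProof.den_concat_inl_inr hb hc)]
          congr 1
          funext n
          simp only [List.length_append]
          by_cases h1 : n < l.length
          · rw [if_pos (by omega), if_pos h1, List.getD_append _ _ _ _ h1]
            exact PGAProof.getD_irrel l h1 _ _
          · rw [if_neg h1]
            by_cases h2 : n < l.length + l'.length
            · rw [if_pos h2, List.getD_append_right _ _ _ _ (by omega),
                if_pos (by omega : n - l.length < l'.length)]
            · rw [if_neg h2, if_neg (by omega : ¬ n - l.length < l'.length)]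
              congr 1
              omega
  | pga2 a n =>
    cases ha : a.den with
    | inr f =>
      rw [PGAProof.den_rep_inr (PGAProof.pow_den_inr ha n), PGAProof.den_rep_inr ha]
    | inl l =>
      have hl : l ≠ [] := fun e => PGAProof.den_ne_nil a (e ▸ ha)
      obtain ⟨a0, t, rfl⟩ : ∃ a0 t, l = a0 :: t := by
        cases l with
        | nil => exact absurd rfl hl
        | cons a0 t => exact ⟨a0, t, rfl⟩
      have hpow := PGAProof.pow_den_inl ha n
      obtain ⟨b0, u, hbu⟩ : ∃ b0 u, PGAProof.repN (a0 :: t) n = b0 :: u := by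
        cases hrr : PGAProof.repN (a0 :: t) n with
        | nil =>
          have := PGAProof.repN_length (a0 :: t) n
          rw [hrr] at this
          simp at this
        | cons b0 u => exact ⟨b0, u, rfl⟩
      rw [hbu] at hpow
      rw [PGAProof.den_rep_cons hpow, PGAProof.den_rep_cons ha]
      congr 1
      funext m
      rw [← hbu]
      exact PGAProof.repN_cycle (a0 :: t) hl b0 a0 n m
  | pga3 a b =>
    obtain ⟨f, hf⟩ := PGAProof.den_rep_exists_inr a
    rw [PGAProof.den_concat_inr hf, hf]
  | pga4 a b =>
    cases ha : a.den with
    | inr f =>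
      rw [PGAProof.den_rep_inr (PGAProof.den_concat_inr ha)]
      rw [PGAProof.den_concat_inr (Q := PGA.rep (PGA.concat b a)) ha]
    | inl l =>
      have hl : l ≠ [] := fun e => PGAProof.den_ne_nil a (e ▸ ha)
      have hp : 0 < l.length := List.length_pos_iff.mpr hl
      cases hb : b.den with
      | inr f =>
        rw [PGAProof.den_rep_inr (PGAProof.den_concat_inl_inr ha hb),
          PGAProof.den_concat_inl_inr ha
            (PGAProof.den_rep_inr (PGAProof.den_concat_inr hb))]
      | inl l' =>
        obtain ⟨a0, t, rfl⟩ : ∃ a0 t, l = a0 :: t := by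
          cases l with
          | nil => exact absurd rfl hl
          | cons a0 t => exact ⟨a0, t, rfl⟩
        have h1 : (PGA.concat a b).den = Sum.inl (a0 :: (t ++ l')) := by
          rw [PGAProof.den_concat_inl_inl ha hb]; rfl
        obtain ⟨b0, u, hbu⟩ : ∃ b0 u, l' ++ (a0 :: t) = b0 :: u := by
          cases hll : l' ++ (a0 :: t) with
          | nil => simp at hll
          | cons b0 u => exact ⟨b0, u, rfl⟩
        have h2 : (PGA.concat b a).den = Sum.inl (b0 :: u) := by
          rw [PGAProof.den_concat_inl_inl hb ha, hbu]
        rw [PGAProof.den_rep_cons h1,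
          PGAProof.den_concat_inl_inr ha (PGAProof.den_rep_cons h2)]
        congr 1
        funext n
        rw [← hbu]
        show ((a0 :: t) ++ l').getD (n % ((a0 :: t) ++ l').length) a0 = _
        by_cases hn : n < (a0 :: t).length
        · rw [if_pos hn,
            Nat.mod_eq_of_lt (by simp only [List.length_append]; omega),
            List.getD_append _ _ _ _ hn]
          exact PGAProof.getD_irrel (a0 :: t) hn _ _
        · rw [if_neg hn]
          push_neg at hn
          have : n = (n - (a0 :: t).length) + (a0 :: t).length := by omega
          conv_lhs => rw [this]
          exact PGAProof.rot (a0 :: t) l' (by simp) (n - (a0 :: t).length) a0 b0
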